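/- Let (X, 𝒜, μ) be a measure space, let Q₀ ∈ 𝒜 satisfy μ(Q₀) < ∞, let ε₀ ∈ (0,1) and let k ≥ 1 be an integer. For each 1 ≤ ℓ ≤ k let ℱ_ℓ be a countable family of pairwise disjoint measurable subsets of Q₀ and set 𝒪_ℓ = ⋃_{Q ∈ ℱ_ℓ} Q. Assume: (i) 𝒪_k ⊆ 𝒪_{k−1} ⊆ ⋯ ⊆ 𝒪_1 ⊆ Q₀; (ii) for every 2 ≤ m ≤ k, every Q ∈ ℱ_{m−1} and every Q' ∈ ℱ_m, either Q ⊆ Q', or Q' ⊆ Q, or Q ∩ Q' = ∅; (iii) μ(𝒪_ℓ ∩ Q) ≤ ε₀ μ(Q) for every Q ∈ ℱ_{ℓ−1} and every 2 ≤ ℓ ≤ k. Then for all integers 1 ≤ m ≤ ℓ ≤ k and every Q ∈ ℱ_m one has μ(𝒪_ℓ ∩ Q) ≤ ε₀^{ℓ−m} μ(Q). -/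

import Mathlib

open MeasureTheory
open scoped ENNReal

/-- **Iteration lemma for good ε₀-covers** (Lemma 3.2 of the paper, abstract
measure-theoretic form). Let `(X, 𝒜, μ)` be a measure space, `Q₀` measurable with
`μ Q₀ < ∞`, `ε₀ ∈ (0,1)` and `k ≥ 1`. For each `1 ≤ ℓ ≤ k` let `ℱ_ℓ = {F ℓ i}_{i : ℕ}`
be a countable family of pairwise disjoint measurable subsets of `Q₀` and
`𝒪_ℓ = ⋃ i, F ℓ i`.  Assuming (i) the `𝒪_ℓ` are decreasing and contained in `Q₀`,
(ii) cubes of consecutive generations are nested or disjoint, and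
(iii) `μ (𝒪_ℓ ∩ Q) ≤ ε₀ μ Q` for every `Q ∈ ℱ_{ℓ-1}`, `2 ≤ ℓ ≤ k`, one concludes
`μ (𝒪_ℓ ∩ Q) ≤ ε₀^{ℓ-m} μ Q` for every `Q ∈ ℱ_m`, `1 ≤ m ≤ ℓ ≤ k`. -/
theorem good_cover_iteration
    {X : Type*} [MeasurableSpace X] (μ : Measure X)
    (Q₀ : Set X) (hQ₀m : MeasurableSet Q₀) (hQ₀fin : μ Q₀ < ⊤)
    (ε₀ : ℝ≥0∞) (hε₀pos : 0 < ε₀) (hε₀lt : ε₀ < 1)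
    (k : ℕ) (hk : 1 ≤ k)
    (F : ℕ → ℕ → Set X)
    (hFmeas : ∀ ℓ i, 1 ≤ ℓ → ℓ ≤ k → MeasurableSet (F ℓ i))
    (hFsub : ∀ ℓ i, 1 ≤ ℓ → ℓ ≤ k → F ℓ i ⊆ Q₀)
    (hFdisj : ∀ ℓ, 1 ≤ ℓ → ℓ ≤ k →
      Pairwise (fun i j => Disjoint (F ℓ i) (F ℓ j)))
    (O : ℕ → Set X) (hO : ∀ ℓ, 1 ≤ ℓ → ℓ ≤ k → O ℓ = ⋃ i, F ℓ i)
    -- (i) nesting of the sets 𝒪_ℓ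
    (hnest : ∀ ℓ, 2 ≤ ℓ → ℓ ≤ k → O ℓ ⊆ O (ℓ - 1))
    (hO1 : O 1 ⊆ Q₀)
    -- (ii) cubes of consecutive generations are nested or disjoint
    (hdyadic : ∀ ℓ i j, 2 ≤ ℓ → ℓ ≤ k →
      F (ℓ - 1) i ⊆ F ℓ j ∨ F ℓ j ⊆ F (ℓ - 1) i ∨ Disjoint (F (ℓ - 1) i) (F ℓ j))
    -- (iii) the packing condition of the good ε₀-cover
    (hsmall : ∀ ℓ i, 2 ≤ ℓ → ℓ ≤ k →
      μ (O ℓ ∩ F (ℓ - 1) i) ≤ ε₀ * μ (F (ℓ - 1) i)) :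
    ∀ m ℓ i, 1 ≤ m → m ≤ ℓ → ℓ ≤ k →
      μ (O ℓ ∩ F m i) ≤ ε₀ ^ (ℓ - m) * μ (F m i) := by
  -- iterated nesting of the O's
  have hOnest : ∀ a b, 1 ≤ a → a ≤ b → b ≤ k → O b ⊆ O a := by
    intro a b ha hab hbk
    induction b with
    | zero => omega
    | succ b ih =>
      rcases Nat.eq_or_lt_of_le hab with h | h
      · exact h ▸ subset_rfl
      · have h1 : O (b + 1) ⊆ O b := by
          have := hnest (b + 1) (by omega) hbk
          simpa using this
        exact h1.trans (ih (by omega) (by omega))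
  have main : ∀ n m i, 1 ≤ m → m + n ≤ k →
      μ (O (m + n) ∩ F m i) ≤ ε₀ ^ n * μ (F m i) := by
    intro n
    induction n with
    | zero =>
      intro m i hm hk'
      simpa using measure_mono (Set.inter_subset_right (s := O (m + 0)))
    | succ n ih =>
      intro m i hm hk'
      by_cases h0 : μ (F m i) = 0
      · refine le_trans (measure_mono Set.inter_subset_right) ?_
        rw [h0]
        exact zero_le
      · have hfin : μ (F m i) ≠ ⊤ :=
          (lt_of_le_of_lt (measure_mono (hFsub m i hm (by omega))) hQ₀fin).ne
        have hsm : μ (O (m + 1) ∩ F m i) ≤ ε₀ * μ (F m i) := by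
          have := hsmall (m + 1) i (by omega) (by omega)
          simpa using this
        have hdich : ∀ j, F (m + 1) j ⊆ F m i ∨ Disjoint (F (m + 1) j) (F m i) := by
          intro j
          rcases hdyadic (m + 1) i j (by omega) (by omega) with h | h | h
          · exfalso
            have hsubO : F m i ⊆ O (m + 1) := by
              rw [hO (m + 1) (by omega) (by omega)]
              simp only [Nat.add_sub_cancel] at h
              exact h.trans (Set.subset_iUnion _ j)
            have hle : μ (F m i) ≤ ε₀ * μ (F m i) := by
              have heq : O (m + 1) ∩ F m i = F m i := Set.inter_eq_right.mpr hsubO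
              rw [heq] at hsm
              exact hsm
            have hlt : ε₀ * μ (F m i) < 1 * μ (F m i) :=
              by rw [mul_comm ε₀, mul_comm 1]; exact ENNReal.mul_lt_mul_right h0 hfin hε₀lt
            rw [one_mul] at hlt
            exact absurd hle hlt.not_ge
          · simp only [Nat.add_sub_cancel] at h
            exact Or.inl h
          · simp only [Nat.add_sub_cancel] at h
            exact Or.inr h.symm
        have key : ∀ j, μ (O (m + (n + 1)) ∩ (F (m + 1) j ∩ F m i)) ≤
            ε₀ ^ n * μ (F (m + 1) j ∩ F m i) := by
          intro j
          rcases hdich j with h | h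
          · rw [Set.inter_eq_left.mpr h]
            have hℓ : m + (n + 1) = (m + 1) + n := by omega
            rw [hℓ]
            exact ih (m + 1) j (by omega) (by omega)
          · rw [Set.disjoint_iff_inter_eq_empty.mp h]
            simp
        have hsub : O (m + (n + 1)) ∩ F m i ⊆
            ⋃ j, O (m + (n + 1)) ∩ (F (m + 1) j ∩ F m i) := by
          intro x hx
          have hxO : x ∈ O (m + 1) :=
            hOnest (m + 1) (m + (n + 1)) (by omega) (by omega) (by omega) hx.1
          rw [hO (m + 1) (by omega) (by omega)] at hxO
          obtain ⟨j, hj⟩ := Set.mem_iUnion.mp hxO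
          exact Set.mem_iUnion.mpr ⟨j, hx.1, hj, hx.2⟩
        have hdisj : Pairwise (Function.onFun Disjoint fun j => F (m + 1) j ∩ F m i) :=
          fun a b hab =>
            ((hFdisj (m + 1) (by omega) (by omega)) hab).mono
              Set.inter_subset_left Set.inter_subset_left
        have hmeas : ∀ j, MeasurableSet (F (m + 1) j ∩ F m i) := fun j =>
          (hFmeas (m + 1) j (by omega) (by omega)).inter (hFmeas m i hm (by omega))
        calc μ (O (m + (n + 1)) ∩ F m i)
            ≤ ∑' j, μ (O (m + (n + 1)) ∩ (F (m + 1) j ∩ F m i)) :=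
              (measure_mono hsub).trans (measure_iUnion_le _)
          _ ≤ ∑' j, ε₀ ^ n * μ (F (m + 1) j ∩ F m i) := ENNReal.tsum_le_tsum key
          _ = ε₀ ^ n * ∑' j, μ (F (m + 1) j ∩ F m i) := ENNReal.tsum_mul_left
          _ = ε₀ ^ n * μ (⋃ j, F (m + 1) j ∩ F m i) := by
              rw [measure_iUnion hdisj hmeas]
          _ = ε₀ ^ n * μ (O (m + 1) ∩ F m i) := by
              rw [hO (m + 1) (by omega) (by omega), Set.iUnion_inter]
          _ ≤ ε₀ ^ n * (ε₀ * μ (F m i)) := mul_le_mul_right hsm _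
          _ = ε₀ ^ (n + 1) * μ (F m i) := by rw [← mul_assoc, ← pow_succ]
  intro m ℓ i hm hml hlk
  have := main (ℓ - m) m i hm (by omega)
  rwa [show m + (ℓ - m) = ℓ from by omega] at this
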